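/- In the setting of Proposition 2 (previous statement), assume additionally that Σ_{mm'} = σ_{mm'} I for real scalars σ_{mm'} (m, m' ∈ {1,2}). Then E[‖y − ŷ‖²] − E[‖y − ŷ*‖²] = −p·σ₁₁ − p·σ₂₂ − 2σ₁₂·Tr(H₁H₂) − p·θ₁ᵀΣ_{W₁}θ₁ − p·θ₂ᵀΣ_{W₂}θ₂. -/

import Mathlib

open Matrix MeasureTheory ProbabilityTheory
open scoped BigOperators ENNReal

/-- The hat matrix `H_A = A (AᵀA)⁻¹ Aᵀ` of a design matrix `A`. -/
noncomputable def hatMat {n : ℕ} {q : Type*} [Fintype q] [DecidableEq q]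
    (A : Matrix (Fin n) q ℝ) : Matrix (Fin n) (Fin n) ℝ :=
  A * (Aᵀ * A)⁻¹ * Aᵀ

lemma l2_mul_integrable {Ω} [MeasurableSpace Ω] {P : Measure Ω} {f g : Ω → ℝ}
    (hf : MemLp f 2 P) (hg : MemLp g 2 P) : Integrable (fun ω => f ω * g ω) P := by
  rw [← memLp_one_iff_integrable]
  have h : (1 : ℝ≥0∞) / 1 = 1 / 2 + 1 / 2 := by
    rw [ENNReal.div_add_div_same, one_add_one_eq_two, ENNReal.div_self two_ne_zero ENNReal.ofNat_ne_top, div_one]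
  exact hg.smul (r := 1) hf

lemma hatMat_transpose {n : ℕ} {q : Type*} [Fintype q] [DecidableEq q]
    (A : Matrix (Fin n) q ℝ) : (hatMat A)ᵀ = hatMat A := by
  have h : (Aᵀ * A)ᵀ = Aᵀ * A := by simp [Matrix.transpose_mul]
  simp [hatMat, Matrix.transpose_mul, Matrix.transpose_nonsing_inv, h, Matrix.mul_assoc]

lemma hatMat_mul_self {n : ℕ} {q : Type*} [Fintype q] [DecidableEq q]
    {A : Matrix (Fin n) q ℝ} (h : IsUnit (Aᵀ * A)) : hatMat A * A = A := by
  have hd : IsUnit (Aᵀ * A).det := (Matrix.isUnit_iff_isUnit_det _).mp h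
  calc hatMat A * A = A * ((Aᵀ * A)⁻¹ * (Aᵀ * A)) := by
        simp [hatMat, Matrix.mul_assoc]
    _ = A := by rw [Matrix.nonsing_inv_mul _ hd, Matrix.mul_one]

lemma hatMat_idem {n : ℕ} {q : Type*} [Fintype q] [DecidableEq q]
    {A : Matrix (Fin n) q ℝ} (h : IsUnit (Aᵀ * A)) : hatMat A * hatMat A = hatMat A := by
  calc hatMat A * hatMat A = (hatMat A * A) * (Aᵀ * A)⁻¹ * Aᵀ := by
        simp [hatMat, Matrix.mul_assoc]
    _ = hatMat A := by rw [hatMat_mul_self h]; rfl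

lemma hatMat_trace {n : ℕ} {q : Type*} [Fintype q] [DecidableEq q]
    {A : Matrix (Fin n) q ℝ} (h : IsUnit (Aᵀ * A)) :
    Matrix.trace (hatMat A) = Fintype.card q := by
  have hd : IsUnit (Aᵀ * A).det := (Matrix.isUnit_iff_isUnit_det _).mp h
  rw [hatMat, Matrix.trace_mul_cycle, Matrix.mul_nonsing_inv _ hd]
  simp

lemma memLp_mulVec {n : ℕ} {Ω : Type*} [MeasurableSpace Ω] {P : Measure Ω}
    (M : Matrix (Fin n) (Fin n) ℝ) {v : Ω → Fin n → ℝ}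
    (hv : ∀ j, MemLp (fun ω => v ω j) 2 P) (i : Fin n) :
    MemLp (fun ω => M.mulVec (v ω) i) 2 P := by
  simp only [Matrix.mulVec, dotProduct]
  exact memLp_finset_sum _ (fun j _ => (hv j).const_mul (M i j))

lemma integrable_dot_mulVec {n : ℕ} {Ω : Type*} [MeasurableSpace Ω] {P : Measure Ω}
    [IsFiniteMeasure P]
    (M N : Matrix (Fin n) (Fin n) ℝ) {v w : Ω → Fin n → ℝ}
    (hv : ∀ j, MemLp (fun ω => v ω j) 2 P) (hw : ∀ j, MemLp (fun ω => w ω j) 2 P) :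
    Integrable (fun ω => M.mulVec (v ω) ⬝ᵥ N.mulVec (w ω)) P := by
  have h : ∀ i : Fin n, Integrable (fun ω => M.mulVec (v ω) i * N.mulVec (w ω) i) P :=
    fun i => l2_mul_integrable (memLp_mulVec M hv i) (memLp_mulVec N hw i)
  simpa [dotProduct] using integrable_finset_sum Finset.univ (fun i _ => h i)

lemma integral_dot_mulVec {n : ℕ} {Ω : Type*} [MeasurableSpace Ω] {P : Measure Ω}
    [IsFiniteMeasure P]
    (M N : Matrix (Fin n) (Fin n) ℝ) {v w : Ω → Fin n → ℝ} {c : ℝ}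
    (hv : ∀ j, MemLp (fun ω => v ω j) 2 P) (hw : ∀ j, MemLp (fun ω => w ω j) 2 P)
    (hcov : ∀ j k, ∫ ω, v ω j * w ω k ∂P = if j = k then c else 0) :
    ∫ ω, M.mulVec (v ω) ⬝ᵥ N.mulVec (w ω) ∂P = c * Matrix.trace (Mᵀ * N) := by
  have key : ∀ i : Fin n, ∫ ω, M.mulVec (v ω) i * N.mulVec (w ω) i ∂P
      = ∑ j, M i j * N i j * c := by
    intro i
    have h1 : ∀ ω, M.mulVec (v ω) i * N.mulVec (w ω) i
        = ∑ j, ∑ k, (M i j * v ω j) * (N i k * w ω k) := by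
      intro ω
      simp only [Matrix.mulVec, dotProduct]
      rw [Finset.sum_mul_sum]
    simp only [h1]
    rw [integral_finset_sum _ (fun j _ => integrable_finset_sum Finset.univ
      (fun k _ => l2_mul_integrable ((hv j).const_mul (M i j)) ((hw k).const_mul (N i k))))]
    have h2 : ∀ j : Fin n, ∫ ω, ∑ k, (M i j * v ω j) * (N i k * w ω k) ∂P
        = M i j * N i j * c := by
      intro j
      rw [integral_finset_sum _ (fun k _ =>
        l2_mul_integrable ((hv j).const_mul (M i j)) ((hw k).const_mul (N i k)))]
      have h3 : ∀ k : Fin n, ∫ ω, (M i j * v ω j) * (N i k * w ω k) ∂P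
          = if j = k then M i j * N i k * c else 0 := by
        intro k
        have he : (fun ω => (M i j * v ω j) * (N i k * w ω k))
            = fun ω => (M i j * N i k) * (v ω j * w ω k) := by funext ω; ring
        rw [he, integral_const_mul, hcov j k]
        by_cases hjk : j = k <;> simp [hjk]
      simp only [h3]
      simp [Finset.sum_ite_eq]
    simp only [h2]
  have hdot : (fun ω => M.mulVec (v ω) ⬝ᵥ N.mulVec (w ω))
      = fun ω => ∑ i, M.mulVec (v ω) i * N.mulVec (w ω) i := by
    funext ω; rfl
  rw [hdot, integral_finset_sum _ (fun i _ =>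
    l2_mul_integrable (memLp_mulVec M hv i) (memLp_mulVec N hw i))]
  simp only [key]
  have htr : Matrix.trace (Mᵀ * N) = ∑ j, ∑ i, M i j * N i j := by
    simp [Matrix.trace, Matrix.mul_apply, Matrix.diag, Matrix.transpose_apply]
  rw [htr, Finset.sum_comm]
  rw [Finset.mul_sum]
  refine Finset.sum_congr rfl fun j _ => ?_
  rw [Finset.mul_sum]
  exact Finset.sum_congr rfl fun i _ => by ring

/-- **Eq. (Prop_trainingerrorExpectation).** In the setting of Proposition 2, if moreover
`Σ_{mm'} = σ_{mm'} I`, then the expected training-error difference between AVR and IR is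
`−pσ₁₁ − pσ₂₂ − 2σ₁₂ Tr(H₁H₂) − pθ₁ᵀΣ_{W₁}θ₁ − pθ₂ᵀΣ_{W₂}θ₂`. -/
theorem training_error_difference_scalar_cov {n p : ℕ}
    {Ω : Type*} [MeasurableSpace Ω] (P : Measure Ω) [IsProbabilityMeasure P]
    (X : Fin 2 → Matrix (Fin n) (Fin p) ℝ)
    (hXm : ∀ m, IsUnit ((X m)ᵀ * X m))
    (hX : IsUnit ((fromCols (X 0) (X 1))ᵀ * fromCols (X 0) (X 1)))
    (β θ : Fin 2 → Fin p → ℝ)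
    (W : Fin 2 → Ω → Fin n → Fin p → ℝ)
    (ε : Fin 2 → Ω → Fin n → ℝ)
    (σ : Fin 2 → Fin 2 → ℝ)
    (SigW : Fin 2 → Matrix (Fin p) (Fin p) ℝ)
    (hWL2 : ∀ m i j, MemLp (fun ω => W m ω i j) 2 P)
    (hWrowIndep : ∀ m, iIndepFun
      (fun i : Fin n => fun ω => W m ω i) P)
    (hWmean : ∀ m i j, ∫ ω, W m ω i j ∂P = 0)
    (hWrowCov : ∀ m i a b, ∫ ω, W m ω i a * W m ω i b ∂P = SigW m a b)
    (hWindep : iIndepFun W P)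
    (hWε : IndepFun (fun ω => fun m => W m ω) (fun ω => fun m => ε m ω) P)
    (hεL2 : ∀ m i, MemLp (fun ω => ε m ω i) 2 P)
    (hεmean : ∀ m i, ∫ ω, ε m ω i ∂P = 0)
    (hcov : ∀ m m' i j, ∫ ω, ε m ω i * ε m' ω j ∂P =
      (σ m m' • (1 : Matrix (Fin n) (Fin n) ℝ)) i j) :
    let y : Fin 2 → Ω → Fin n → ℝ :=
      fun m ω => (X m).mulVec (β m) + (Matrix.of (W m ω)).mulVec (θ m) + ε m ω
    let H := hatMat (fromCols (X 0) (X 1))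
    let H₁ := hatMat (X 0)
    let H₂ := hatMat (X 1)
    let yhat : Ω → Fin n → ℝ := fun ω => H.mulVec (y 0 ω + y 1 ω)
    let yhatStar : Ω → Fin n → ℝ := fun ω => H₁.mulVec (y 0 ω) + H₂.mulVec (y 1 ω)
    (∫ ω, ((y 0 ω + y 1 ω) - yhat ω) ⬝ᵥ ((y 0 ω + y 1 ω) - yhat ω) ∂P)
      - (∫ ω, ((y 0 ω + y 1 ω) - yhatStar ω) ⬝ᵥ ((y 0 ω + y 1 ω) - yhatStar ω) ∂P)
      = -(p : ℝ) * σ 0 0 - (p : ℝ) * σ 1 1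
        - 2 * σ 0 1 * Matrix.trace (H₁ * H₂)
        - (p : ℝ) * (θ 0 ⬝ᵥ (SigW 0).mulVec (θ 0))
        - (p : ℝ) * (θ 1 ⬝ᵥ (SigW 1).mulVec (θ 1)) := by
  intro y H H₁ H₂ yhat yhatStar
  -- the noise vectors
  set v : Fin 2 → Ω → Fin n → ℝ := fun m ω => (Matrix.of (W m ω)).mulVec (θ m) + ε m ω
    with hvdef
  set τ : Fin 2 → ℝ := fun m => θ m ⬝ᵥ (SigW m).mulVec (θ m) with hτdef
  have hy : ∀ m ω, y m ω = (X m).mulVec (β m) + v m ω := fun m ω => add_assoc _ _ _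
  have hvapp : ∀ m ω j, v m ω j = (∑ a, W m ω j a * θ m a) + ε m ω j := by
    intro m ω j
    simp [hvdef, Matrix.mulVec, dotProduct]
  -- L² facts
  have hWθterm : ∀ m j a, MemLp (fun ω => W m ω j a * θ m a) 2 P := by
    intro m j a
    simpa [mul_comm] using (hWL2 m j a).const_mul (θ m a)
  have hWθL2 : ∀ m j, MemLp (fun ω => ∑ a, W m ω j a * θ m a) 2 P := by
    intro m j
    exact memLp_finset_sum _ (fun a _ => hWθterm m j a)
  have hvL2 : ∀ m j, MemLp (fun ω => v m ω j) 2 P := by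
    intro m j
    have := (hWθL2 m j).add (hεL2 m j)
    simp only [hvapp]; exact this
  -- means
  have hWθmean : ∀ m j, ∫ ω, (∑ a, W m ω j a * θ m a) ∂P = 0 := by
    intro m j
    rw [integral_finset_sum _ (fun a _ => ((hWL2 m j a).integrable one_le_two).mul_const _)]
    simp [integral_mul_const, hWmean]
  -- covariance of the noise
  have hv_cov : ∀ m m' j k, ∫ ω, v m ω j * v m' ω k ∂P
      = if j = k then σ m m' + (if m = m' then τ m else 0) else 0 := by
    have hWW : ∀ m m' j k, ∫ ω, (∑ a, W m ω j a * θ m a) * (∑ b, W m' ω k b * θ m' b) ∂P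
        = if m = m' ∧ j = k then τ m else 0 := by
      intro m m' j k
      by_cases hmm : m = m'
      · subst hmm
        by_cases hjk : j = k
        · subst hjk
          have hexp : ∀ ω : Ω, (∑ a, W m ω j a * θ m a) * (∑ b, W m ω j b * θ m b)
              = ∑ a, ∑ b, (θ m a * θ m b) * (W m ω j a * W m ω j b) := by
            intro ω; rw [Finset.sum_mul_sum]
            exact Finset.sum_congr rfl fun a _ => Finset.sum_congr rfl fun b _ => by ring
          simp only [hexp]
          rw [integral_finset_sum _ (fun a _ => integrable_finset_sum _ (fun b _ =>
            (l2_mul_integrable (hWL2 m j a) (hWL2 m j b)).const_mul _))]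
          have hsum : ∀ a : Fin p, ∫ ω, (∑ b, (θ m a * θ m b) * (W m ω j a * W m ω j b)) ∂P
              = ∑ b, (θ m a * θ m b) * SigW m a b := by
            intro a
            rw [integral_finset_sum _ (fun b _ =>
              (l2_mul_integrable (hWL2 m j a) (hWL2 m j b)).const_mul _)]
            exact Finset.sum_congr rfl fun b _ => by rw [integral_const_mul, hWrowCov]
          simp only [hsum]
          have hτm : τ m = ∑ a, ∑ b, (θ m a * θ m b) * SigW m a b := by
            simp only [hτdef, dotProduct, Matrix.mulVec, Finset.mul_sum]
            exact Finset.sum_congr rfl fun a _ => Finset.sum_congr rfl fun b _ => by ring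
          simp [hτm]
        · have hind := (hWrowIndep m).indepFun hjk
          have hφ : ∀ (c : Fin p → ℝ), Measurable (fun r : Fin p → ℝ => ∑ a, r a * c a) :=
            fun c => Finset.measurable_sum _ (fun a _ => (measurable_pi_apply a).mul_const _)
          have hcomp := hind.comp (hφ (θ m)) (hφ (θ m))
          have hres : ∫ ω, (∑ a, W m ω j a * θ m a) * (∑ b, W m ω k b * θ m b) ∂P
              = (∫ ω, (∑ a, W m ω j a * θ m a) ∂P) * ∫ ω, (∑ b, W m ω k b * θ m b) ∂P :=
            hcomp.integral_mul_eq_mul_integral (hWθL2 m j).aestronglyMeasurable (hWθL2 m k).aestronglyMeasurable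
          rw [hres, hWθmean]
          simp [hjk]
      · have hind := hWindep.indepFun hmm
        have hφ : ∀ (j : Fin n) (c : Fin p → ℝ),
            Measurable (fun r : Fin n → Fin p → ℝ => ∑ a, r j a * c a) :=
          fun j c => Finset.measurable_sum _ (fun a _ =>
            ((measurable_pi_apply a).comp (measurable_pi_apply j)).mul_const _)
        have hcomp := hind.comp (hφ j (θ m)) (hφ k (θ m'))
        have hres : ∫ ω, (∑ a, W m ω j a * θ m a) * (∑ b, W m' ω k b * θ m' b) ∂P
            = (∫ ω, (∑ a, W m ω j a * θ m a) ∂P) * ∫ ω, (∑ b, W m' ω k b * θ m' b) ∂P :=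
          hcomp.integral_mul_eq_mul_integral (hWθL2 m j).aestronglyMeasurable (hWθL2 m' k).aestronglyMeasurable
        rw [hres, hWθmean]
        simp [hmm]
    have hWe : ∀ m m' j k, ∫ ω, (∑ a, W m ω j a * θ m a) * ε m' ω k ∂P = 0 := by
      intro m m' j k
      have hφ : Measurable (fun w : Fin 2 → Fin n → Fin p → ℝ => ∑ a, w m j a * θ m a) :=
        Finset.measurable_sum _ (fun a _ =>
          ((measurable_pi_apply a).comp
            ((measurable_pi_apply j).comp (measurable_pi_apply m))).mul_const _)
      have hψ : Measurable (fun e : Fin 2 → Fin n → ℝ => e m' k) :=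
        (measurable_pi_apply k).comp (measurable_pi_apply m')
      have hcomp := hWε.comp hφ hψ
      have hres : ∫ ω, (∑ a, W m ω j a * θ m a) * ε m' ω k ∂P
          = (∫ ω, (∑ a, W m ω j a * θ m a) ∂P) * ∫ ω, ε m' ω k ∂P :=
        hcomp.integral_mul_eq_mul_integral (hWθL2 m j).aestronglyMeasurable (hεL2 m' k).aestronglyMeasurable
      rw [hres, hWθmean]; ring
    have heW : ∀ m m' j k, ∫ ω, ε m ω j * (∑ b, W m' ω k b * θ m' b) ∂P = 0 := by
      intro m m' j k
      have hflip : (∫ ω, ε m ω j * (∑ b, W m' ω k b * θ m' b) ∂P)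
          = ∫ ω, (∑ b, W m' ω k b * θ m' b) * ε m ω j ∂P := by
        congr 1; funext ω; ring
      rw [hflip, hWe]
    have hεε : ∀ m m' j k, ∫ ω, ε m ω j * ε m' ω k ∂P = if j = k then σ m m' else 0 := by
      intro m m' j k
      rw [hcov m m' j k]
      by_cases hjk : j = k <;> simp [hjk, Matrix.one_apply]
    intro m m' j k
    have hexp : (fun ω => v m ω j * v m' ω k) = fun ω =>
        ((∑ a, W m ω j a * θ m a) * (∑ b, W m' ω k b * θ m' b)
          + (∑ a, W m ω j a * θ m a) * ε m' ω k)
        + (ε m ω j * (∑ b, W m' ω k b * θ m' b) + ε m ω j * ε m' ω k) := by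
      funext ω; rw [hvapp, hvapp]; ring
    have i1 : Integrable (fun ω => (∑ a, W m ω j a * θ m a) * (∑ b, W m' ω k b * θ m' b)) P :=
      l2_mul_integrable (hWθL2 m j) (hWθL2 m' k)
    have i2 : Integrable (fun ω => (∑ a, W m ω j a * θ m a) * ε m' ω k) P :=
      l2_mul_integrable (hWθL2 m j) (hεL2 m' k)
    have i3 : Integrable (fun ω => ε m ω j * (∑ b, W m' ω k b * θ m' b)) P :=
      l2_mul_integrable (hεL2 m j) (hWθL2 m' k)
    have i4 : Integrable (fun ω => ε m ω j * ε m' ω k) P :=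
      l2_mul_integrable (hεL2 m j) (hεL2 m' k)
    have i12 : Integrable (fun ω => (∑ a, W m ω j a * θ m a) * (∑ b, W m' ω k b * θ m' b)
        + (∑ a, W m ω j a * θ m a) * ε m' ω k) P := i1.add i2
    have i34 : Integrable (fun ω => ε m ω j * (∑ b, W m' ω k b * θ m' b)
        + ε m ω j * ε m' ω k) P := i3.add i4
    rw [hexp, integral_add i12 i34, integral_add i1 i2, integral_add i3 i4,
      hWW, hWe, heW, hεε]
    by_cases hjk : j = k <;> by_cases hmm : m = m' <;> simp [hjk, hmm] <;> ring
  -- hat matrix facts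
  have hH0 : H * X 0 = X 0 := by
    have h : H * fromCols (X 0) (X 1) = fromCols (X 0) (X 1) := hatMat_mul_self hX
    rw [Matrix.mul_fromCols] at h
    have h' := congrArg Matrix.toCols₁ h
    simpa [Matrix.toCols₁_fromCols] using h'
  have hH1 : H * X 1 = X 1 := by
    have h : H * fromCols (X 0) (X 1) = fromCols (X 0) (X 1) := hatMat_mul_self hX
    rw [Matrix.mul_fromCols] at h
    have h' := congrArg Matrix.toCols₂ h
    simpa [Matrix.toCols₂_fromCols] using h'
  have h1X : H₁ * X 0 = X 0 := hatMat_mul_self (hXm 0)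
  have h2X : H₂ * X 1 = X 1 := hatMat_mul_self (hXm 1)
  have hHmu0 : H.mulVec ((X 0).mulVec (β 0)) = (X 0).mulVec (β 0) := by
    rw [Matrix.mulVec_mulVec, hH0]
  have hHmu1 : H.mulVec ((X 1).mulVec (β 1)) = (X 1).mulVec (β 1) := by
    rw [Matrix.mulVec_mulVec, hH1]
  have h1mu : H₁.mulVec ((X 0).mulVec (β 0)) = (X 0).mulVec (β 0) := by
    rw [Matrix.mulVec_mulVec, h1X]
  have h2mu : H₂.mulVec ((X 1).mulVec (β 1)) = (X 1).mulVec (β 1) := by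
    rw [Matrix.mulVec_mulVec, h2X]
  -- residual identities
  have hres1 : ∀ ω, (y 0 ω + y 1 ω) - yhat ω
      = ((1 : Matrix (Fin n) (Fin n) ℝ) - H).mulVec (v 0 ω + v 1 ω) := by
    intro ω
    show (y 0 ω + y 1 ω) - H.mulVec (y 0 ω + y 1 ω) = _
    have h01 : y 0 ω + y 1 ω
        = ((X 0).mulVec (β 0) + (X 1).mulVec (β 1)) + (v 0 ω + v 1 ω) := by
      rw [hy 0, hy 1]; abel
    simp only [h01, Matrix.mulVec_add, Matrix.sub_mulVec, Matrix.one_mulVec, hHmu0, hHmu1]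
    abel
  have hres2 : ∀ ω, (y 0 ω + y 1 ω) - yhatStar ω
      = ((1 : Matrix (Fin n) (Fin n) ℝ) - H₁).mulVec (v 0 ω)
        + ((1 : Matrix (Fin n) (Fin n) ℝ) - H₂).mulVec (v 1 ω) := by
    intro ω
    show (y 0 ω + y 1 ω) - (H₁.mulVec (y 0 ω) + H₂.mulVec (y 1 ω)) = _
    simp only [hy, Matrix.mulVec_add, Matrix.sub_mulVec, Matrix.one_mulVec, h1mu, h2mu]
    abel
  -- algebra of the projections
  have hHT : Hᵀ = H := hatMat_transpose _
  have hH1T : H₁ᵀ = H₁ := hatMat_transpose _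
  have hH2T : H₂ᵀ = H₂ := hatMat_transpose _
  have hHH : H * H = H := hatMat_idem hX
  have h11 : H₁ * H₁ = H₁ := hatMat_idem (hXm 0)
  have h22 : H₂ * H₂ = H₂ := hatMat_idem (hXm 1)
  have htrH : Matrix.trace H = (p : ℝ) + p := by
    have h : Matrix.trace H = (Fintype.card (Fin p ⊕ Fin p) : ℝ) := hatMat_trace hX
    rw [h]; push_cast [Fintype.card_sum, Fintype.card_fin]; ring
  have htrH1 : Matrix.trace H₁ = (p : ℝ) := by
    have h : Matrix.trace H₁ = (Fintype.card (Fin p) : ℝ) := hatMat_trace (hXm 0)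
    rw [h]; simp
  have htrH2 : Matrix.trace H₂ = (p : ℝ) := by
    have h : Matrix.trace H₂ = (Fintype.card (Fin p) : ℝ) := hatMat_trace (hXm 1)
    rw [h]; simp
  have htrAA : Matrix.trace ((1 - H)ᵀ * (1 - H)) = (n : ℝ) - 2 * p := by
    have ht : (1 - H)ᵀ * (1 - H) = 1 - H := by
      rw [Matrix.transpose_sub, Matrix.transpose_one, hHT, Matrix.sub_mul, Matrix.one_mul,
        Matrix.mul_sub, Matrix.mul_one, hHH]
      abel
    rw [ht, Matrix.trace_sub, Matrix.trace_one, htrH]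
    push_cast [Fintype.card_fin]; ring
  have htrB11 : Matrix.trace ((1 - H₁)ᵀ * (1 - H₁)) = (n : ℝ) - p := by
    have ht : (1 - H₁)ᵀ * (1 - H₁) = 1 - H₁ := by
      rw [Matrix.transpose_sub, Matrix.transpose_one, hH1T, Matrix.sub_mul, Matrix.one_mul,
        Matrix.mul_sub, Matrix.mul_one, h11]
      abel
    rw [ht, Matrix.trace_sub, Matrix.trace_one, htrH1]
    push_cast [Fintype.card_fin]; ring
  have htrB22 : Matrix.trace ((1 - H₂)ᵀ * (1 - H₂)) = (n : ℝ) - p := by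
    have ht : (1 - H₂)ᵀ * (1 - H₂) = 1 - H₂ := by
      rw [Matrix.transpose_sub, Matrix.transpose_one, hH2T, Matrix.sub_mul, Matrix.one_mul,
        Matrix.mul_sub, Matrix.mul_one, h22]
      abel
    rw [ht, Matrix.trace_sub, Matrix.trace_one, htrH2]
    push_cast [Fintype.card_fin]; ring
  have htrB12 : Matrix.trace ((1 - H₁)ᵀ * (1 - H₂))
      = (n : ℝ) - 2 * p + Matrix.trace (H₁ * H₂) := by
    have ht : (1 - H₁)ᵀ * (1 - H₂) = 1 - H₁ - H₂ + H₁ * H₂ := by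
      rw [Matrix.transpose_sub, Matrix.transpose_one, hH1T, Matrix.sub_mul, Matrix.one_mul,
        Matrix.mul_sub, Matrix.mul_one]
      abel
    rw [ht, Matrix.trace_add, Matrix.trace_sub, Matrix.trace_sub, Matrix.trace_one,
      htrH1, htrH2]
    push_cast [Fintype.card_fin]; ring
  have htrB21 : Matrix.trace ((1 - H₂)ᵀ * (1 - H₁))
      = (n : ℝ) - 2 * p + Matrix.trace (H₁ * H₂) := by
    have ht : (1 - H₂)ᵀ * (1 - H₁) = 1 - H₂ - H₁ + H₂ * H₁ := by
      rw [Matrix.transpose_sub, Matrix.transpose_one, hH2T, Matrix.sub_mul, Matrix.one_mul,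
        Matrix.mul_sub, Matrix.mul_one]
      abel
    rw [ht, Matrix.trace_add, Matrix.trace_sub, Matrix.trace_sub, Matrix.trace_one,
      htrH1, htrH2, Matrix.trace_mul_comm H₂ H₁]
    push_cast [Fintype.card_fin]; ring
  -- symmetry of σ (up to the trace factor)
  have hσT : σ 1 0 * Matrix.trace (H₁ * H₂) = σ 0 1 * Matrix.trace (H₁ * H₂) := by
    rcases Nat.eq_zero_or_pos n with hn | hn
    · have hE : IsEmpty (Fin n) := ⟨fun i => absurd i.isLt (by omega)⟩
      have h0 : Matrix.trace (H₁ * H₂) = 0 := by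
        haveI := hE
        simp [Matrix.trace]
      rw [h0]; ring
    · have i : Fin n := ⟨0, hn⟩
      have heq : ∫ ω, ε 0 ω i * ε 1 ω i ∂P = ∫ ω, ε 1 ω i * ε 0 ω i ∂P := by
        congr 1; funext ω; ring
      rw [hcov 0 1 i i, hcov 1 0 i i] at heq
      simp only [Matrix.smul_apply, Matrix.one_apply_eq, smul_eq_mul, mul_one] at heq
      rw [heq]
  -- individual covariances
  have hc00 : ∀ j k, ∫ ω, v 0 ω j * v 0 ω k ∂P = if j = k then σ 0 0 + τ 0 else 0 := by
    intro j k
    have h := hv_cov 0 0 j k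
    rwa [if_pos rfl] at h
  have hc11 : ∀ j k, ∫ ω, v 1 ω j * v 1 ω k ∂P = if j = k then σ 1 1 + τ 1 else 0 := by
    intro j k
    have h := hv_cov 1 1 j k
    rwa [if_pos rfl] at h
  have hc01 : ∀ j k, ∫ ω, v 0 ω j * v 1 ω k ∂P = if j = k then σ 0 1 else 0 := by
    intro j k
    have h := hv_cov 0 1 j k
    rwa [if_neg (show ¬(0 : Fin 2) = 1 by decide), add_zero] at h
  have hc10 : ∀ j k, ∫ ω, v 1 ω j * v 0 ω k ∂P = if j = k then σ 1 0 else 0 := by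
    intro j k
    have h := hv_cov 1 0 j k
    rwa [if_neg (show ¬(1 : Fin 2) = 0 by decide), add_zero] at h
  -- the two expected training errors
  have I1 : ∫ ω, ((y 0 ω + y 1 ω) - yhat ω) ⬝ᵥ ((y 0 ω + y 1 ω) - yhat ω) ∂P
      = (σ 0 0 + τ 0) * Matrix.trace ((1 - H)ᵀ * (1 - H))
        + σ 0 1 * Matrix.trace ((1 - H)ᵀ * (1 - H))
        + (σ 1 0 * Matrix.trace ((1 - H)ᵀ * (1 - H))
        + (σ 1 1 + τ 1) * Matrix.trace ((1 - H)ᵀ * (1 - H))) := by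
    have hpt : ∀ ω, ((y 0 ω + y 1 ω) - yhat ω) ⬝ᵥ ((y 0 ω + y 1 ω) - yhat ω)
        = ((1 - H).mulVec (v 0 ω) ⬝ᵥ (1 - H).mulVec (v 0 ω)
          + (1 - H).mulVec (v 0 ω) ⬝ᵥ (1 - H).mulVec (v 1 ω))
        + ((1 - H).mulVec (v 1 ω) ⬝ᵥ (1 - H).mulVec (v 0 ω)
          + (1 - H).mulVec (v 1 ω) ⬝ᵥ (1 - H).mulVec (v 1 ω)) := by
      intro ω
      rw [hres1 ω, Matrix.mulVec_add, add_dotProduct, dotProduct_add, dotProduct_add]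
    have j00 := integrable_dot_mulVec (1 - H) (1 - H) (hvL2 0) (hvL2 0)
    have j01 := integrable_dot_mulVec (1 - H) (1 - H) (hvL2 0) (hvL2 1)
    have j10 := integrable_dot_mulVec (1 - H) (1 - H) (hvL2 1) (hvL2 0)
    have j11 := integrable_dot_mulVec (1 - H) (1 - H) (hvL2 1) (hvL2 1)
    have ja : Integrable (fun ω => (1 - H).mulVec (v 0 ω) ⬝ᵥ (1 - H).mulVec (v 0 ω)
        + (1 - H).mulVec (v 0 ω) ⬝ᵥ (1 - H).mulVec (v 1 ω)) P := j00.add j01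
    have jb : Integrable (fun ω => (1 - H).mulVec (v 1 ω) ⬝ᵥ (1 - H).mulVec (v 0 ω)
        + (1 - H).mulVec (v 1 ω) ⬝ᵥ (1 - H).mulVec (v 1 ω)) P := j10.add j11
    simp only [hpt]
    rw [integral_add ja jb, integral_add j00 j01, integral_add j10 j11,
      integral_dot_mulVec _ _ (hvL2 0) (hvL2 0) hc00,
      integral_dot_mulVec _ _ (hvL2 0) (hvL2 1) hc01,
      integral_dot_mulVec _ _ (hvL2 1) (hvL2 0) hc10,
      integral_dot_mulVec _ _ (hvL2 1) (hvL2 1) hc11]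
  have I2 : ∫ ω, ((y 0 ω + y 1 ω) - yhatStar ω) ⬝ᵥ ((y 0 ω + y 1 ω) - yhatStar ω) ∂P
      = (σ 0 0 + τ 0) * Matrix.trace ((1 - H₁)ᵀ * (1 - H₁))
        + σ 0 1 * Matrix.trace ((1 - H₁)ᵀ * (1 - H₂))
        + (σ 1 0 * Matrix.trace ((1 - H₂)ᵀ * (1 - H₁))
        + (σ 1 1 + τ 1) * Matrix.trace ((1 - H₂)ᵀ * (1 - H₂))) := by
    have hpt : ∀ ω, ((y 0 ω + y 1 ω) - yhatStar ω) ⬝ᵥ ((y 0 ω + y 1 ω) - yhatStar ω)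
        = ((1 - H₁).mulVec (v 0 ω) ⬝ᵥ (1 - H₁).mulVec (v 0 ω)
          + (1 - H₁).mulVec (v 0 ω) ⬝ᵥ (1 - H₂).mulVec (v 1 ω))
        + ((1 - H₂).mulVec (v 1 ω) ⬝ᵥ (1 - H₁).mulVec (v 0 ω)
          + (1 - H₂).mulVec (v 1 ω) ⬝ᵥ (1 - H₂).mulVec (v 1 ω)) := by
      intro ω
      rw [hres2 ω, add_dotProduct, dotProduct_add, dotProduct_add]
    have j00 := integrable_dot_mulVec (1 - H₁) (1 - H₁) (hvL2 0) (hvL2 0)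
    have j01 := integrable_dot_mulVec (1 - H₁) (1 - H₂) (hvL2 0) (hvL2 1)
    have j10 := integrable_dot_mulVec (1 - H₂) (1 - H₁) (hvL2 1) (hvL2 0)
    have j11 := integrable_dot_mulVec (1 - H₂) (1 - H₂) (hvL2 1) (hvL2 1)
    have ja : Integrable (fun ω => (1 - H₁).mulVec (v 0 ω) ⬝ᵥ (1 - H₁).mulVec (v 0 ω)
        + (1 - H₁).mulVec (v 0 ω) ⬝ᵥ (1 - H₂).mulVec (v 1 ω)) P := j00.add j01
    have jb : Integrable (fun ω => (1 - H₂).mulVec (v 1 ω) ⬝ᵥ (1 - H₁).mulVec (v 0 ω)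
        + (1 - H₂).mulVec (v 1 ω) ⬝ᵥ (1 - H₂).mulVec (v 1 ω)) P := j10.add j11
    simp only [hpt]
    rw [integral_add ja jb, integral_add j00 j01, integral_add j10 j11,
      integral_dot_mulVec _ _ (hvL2 0) (hvL2 0) hc00,
      integral_dot_mulVec _ _ (hvL2 0) (hvL2 1) hc01,
      integral_dot_mulVec _ _ (hvL2 1) (hvL2 0) hc10,
      integral_dot_mulVec _ _ (hvL2 1) (hvL2 1) hc11]
  rw [I1, I2, htrAA, htrB11, htrB12, htrB21, htrB22]
  have hτ0 : τ 0 = θ 0 ⬝ᵥ (SigW 0).mulVec (θ 0) := rfl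
  have hτ1 : τ 1 = θ 1 ⬝ᵥ (SigW 1).mulVec (θ 1) := rfl
  rw [← hτ0, ← hτ1]
  linear_combination -hσT
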